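/- Let G be a dense additive subgroup of ℝ containing ℤ, 𝔾 = G ∩ [0,1) with addition modulo 1, and n ≥ 2 an integer. If 1/n ∈ 𝔾, then [𝔾 : n𝔾] = [G : nG]. -/

import Mathlib

/-- The multiplication-by-`n` endomorphism of an additive commutative group. -/
def smulHom (A : Type*) [AddCommGroup A] (n : ℕ) : A →+ A :=
  AddMonoidHom.mk' (fun a => n • a) (fun a b => smul_add n a b)

/-- If `1/n ∈ 𝔾` then `[𝔾 : n𝔾] = [G : nG]`, where `𝔾 = G ∩ [0,1)` is realized as the
image `H` of `G` in `ℝ/ℤ = AddCircle 1`. -/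
theorem stmt_7 (G : AddSubgroup ℝ) (hdense : Dense (G : Set ℝ))
    (hZ : ∀ k : ℤ, (k : ℝ) ∈ G) (n : ℕ) (hn : 2 ≤ n)
    (h1n : (1 / (n : ℝ)) ∈ G) :
    ∀ H : AddSubgroup (AddCircle (1:ℝ)),
      H = G.map (QuotientAddGroup.mk' (AddSubgroup.zmultiples (1:ℝ))) →
      Cardinal.mk (H ⧸ ((H.map (smulHom (AddCircle (1:ℝ)) n)).addSubgroupOf H))
        = Cardinal.mk (G ⧸ ((G.map (smulHom ℝ n)).addSubgroupOf G)) := by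
  intro H hH
  subst hH
  have hn0 : (n : ℝ) ≠ 0 := by positivity
  set π := QuotientAddGroup.mk' (AddSubgroup.zmultiples (1:ℝ)) with hπ
  set K := ((G.map π).map (smulHom (AddCircle (1:ℝ)) n)).addSubgroupOf (G.map π) with hK
  let p : G →+ G.map π := π.addSubgroupMap G
  let f : G →+ (G.map π) ⧸ K := (QuotientAddGroup.mk' K).comp p
  have hfsurj : Function.Surjective f :=
    (QuotientAddGroup.mk'_surjective K).comp (π.addSubgroupMap_surjective G)
  have hker : f.ker = (G.map (smulHom ℝ n)).addSubgroupOf G := by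
    ext ⟨g, hg⟩
    simp only [f, AddMonoidHom.mem_ker, AddMonoidHom.comp_apply, QuotientAddGroup.mk'_apply,
      QuotientAddGroup.eq_zero_iff, hK, AddSubgroup.mem_addSubgroupOf, AddSubgroup.mem_map]
    have hp : ((p ⟨g, hg⟩ : G.map π) : AddCircle (1:ℝ)) = π g := rfl
    rw [hp]
    constructor
    · rintro ⟨x, ⟨g', hg', rfl⟩, hx⟩
      have hx' : π ((n : ℕ) • g') = π g := by
        rw [map_nsmul]; exact hx
      rw [QuotientAddGroup.mk'_eq_mk'] at hx'
      obtain ⟨z, hz, hzeq⟩ := hx'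
      obtain ⟨k, rfl⟩ := AddSubgroup.mem_zmultiples_iff.mp hz
      refine ⟨g' + k • (1 / (n : ℝ)), AddSubgroup.add_mem _ hg' (AddSubgroup.zsmul_mem _ h1n k), ?_⟩
      show (n : ℕ) • (g' + k • (1 / (n : ℝ))) = g
      rw [← hzeq]
      simp only [nsmul_eq_mul, zsmul_eq_mul, smul_eq_mul]
      field_simp
    · rintro ⟨g', hg', hgg⟩
      refine ⟨π g', ⟨g', hg', rfl⟩, ?_⟩
      show (n : ℕ) • π g' = π g
      rw [← map_nsmul]
      congr 1
  calc Cardinal.mk ((G.map π) ⧸ K)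
      = Cardinal.mk (G ⧸ f.ker) :=
        Cardinal.mk_congr (QuotientAddGroup.quotientKerEquivOfSurjective f hfsurj).symm.toEquiv
    _ = _ := by rw [hker]
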